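/- Let M be a finite-dimensional H̃_n-module and let t = (t_1,…,t_n) ∈ (ℂ×)^n with t_i ≠ t_{i+1}. Then the operator x_{i+1} − x_i is invertible on the generalized weight space M_t^gen, so that the map τ_i m = (T_i − (q−q^{−1}) x_{i+1} (x_{i+1} − x_i)^{−1}) m is well defined on M_t^gen, and τ_i maps M_t^gen into M_{s_it}^gen, where s_it is obtained from t by interchanging the coordinates t_i and t_{i+1}. -/

import Mathlib

open scoped Classical

noncomputable section

/-! ## Partitions and skew shapes -/

/-- A partition: a weakly decreasing sequence of natural numbers that is eventually zero. -/
structure Partition' where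
  part : ℕ → ℕ
  antitone : Antitone part
  eventually_zero : ∃ N, part N = 0

/-- A skew shape `λ/μ`: a pair of partitions with `μ ⊆ λ`. -/
structure SkewShape where
  lam : Partition'
  mu : Partition'
  mu_le : ∀ i, mu.part i ≤ lam.part i

/-- The boxes of the skew shape: pairs `(row, column)` (0-indexed). -/
def SkewShape.cellSet (S : SkewShape) : Set (ℕ × ℕ) :=
  {b | S.mu.part b.1 ≤ b.2 ∧ b.2 < S.lam.part b.1}

theorem SkewShape.cellSet_finite (S : SkewShape) : S.cellSet.Finite := by
  obtain ⟨N, hN⟩ := S.lam.eventually_zero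
  refine Set.Finite.subset ((Set.finite_Iio N).prod (Set.finite_Iio (S.lam.part 0))) ?_
  rintro ⟨r, c⟩ ⟨h1, h2⟩
  dsimp only at h1 h2
  have h0 : S.lam.part r ≤ S.lam.part 0 := S.lam.antitone (Nat.zero_le r)
  constructor
  · simp only [Set.mem_Iio]
    by_contra h
    push_neg at h
    have : S.lam.part r ≤ S.lam.part N := S.lam.antitone h
    omega
  · simp only [Set.mem_Iio]; omega

/-- The boxes of a skew shape, as a finite set. -/
def SkewShape.cells (S : SkewShape) : Finset (ℕ × ℕ) := S.cellSet_finite.toFinset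

theorem SkewShape.mem_cells {S : SkewShape} {b : ℕ × ℕ} :
    b ∈ S.cells ↔ S.mu.part b.1 ≤ b.2 ∧ b.2 < S.lam.part b.1 := by
  simp [SkewShape.cells, SkewShape.cellSet]

/-- The (major) diagonal on which a box sits. -/
def boxDiag (b : ℕ × ℕ) : ℤ := (b.2 : ℤ) - (b.1 : ℤ)

/-- The order in which the boxes of a skew shape are numbered `box₁, …, boxₙ`:
along major diagonals from southwest to northeast. -/
def numLT (b b' : ℕ × ℕ) : Prop :=
  boxDiag b < boxDiag b' ∨ (boxDiag b = boxDiag b' ∧ b.1 < b'.1)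

/-- Column reading order on boxes. -/
def colLT (b b' : ℕ × ℕ) : Prop := b.2 < b'.2 ∨ (b.2 = b'.2 ∧ b.1 < b'.1)

/-- Row reading order on boxes. -/
def rowLT (b b' : ℕ × ℕ) : Prop := b.1 < b'.1 ∨ (b.1 = b'.1 ∧ b.2 < b'.2)

/-- A standard tableau of shape `S` with `n` boxes and entries `off+1, …, off+n`:
entries increase to the right along rows and down columns. -/
structure StdTab (S : SkewShape) (off n : ℕ) where
  entry : ℕ × ℕ → ℕ
  zero_off : ∀ b, b ∉ S.cells → entry b = 0
  bijOn : Set.BijOn entry ↑S.cells (Set.Icc (off + 1) (off + n))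
  row_inc : ∀ r c, (r, c) ∈ S.cells → (r, c + 1) ∈ S.cells → entry (r, c) < entry (r, c + 1)
  col_inc : ∀ r c, (r, c) ∈ S.cells → (r + 1, c) ∈ S.cells → entry (r, c) < entry (r + 1, c)

/-- `L.box i` : the box of the standard tableau `L` containing the entry `i`. -/
def StdTab.box {S : SkewShape} {off n : ℕ} (L : StdTab S off n) (i : ℕ) : ℕ × ℕ :=
  Function.invFunOn L.entry ↑S.cells i

/-- The column reading tableau: entries `1,…,n` entered consecutively down the columns,
beginning with the southwest-most connected component, filling columns left to right.
(Equivalently: the entries are increasing for the column reading order on boxes.) -/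
def IsColReading {S : SkewShape} {off n : ℕ} (C : StdTab S off n) : Prop :=
  ∀ b ∈ S.cells, ∀ b' ∈ S.cells, (colLT b b' ↔ C.entry b < C.entry b')

/-- The row reading tableau: entries `1,…,n` entered left to right across the rows,
beginning with the northeast-most connected component, filling rows top to bottom. -/
def IsRowReading {S : SkewShape} {off n : ℕ} (R : StdTab S off n) : Prop :=
  ∀ b ∈ S.cells, ∀ b' ∈ S.cells, (rowLT b b' ↔ R.entry b < R.entry b')

/-! ## Placed skew shapes -/

/-- `q^{2z} = e^{z ln (q²)}`. -/
def qpow (q : ℝ) (z : ℂ) : ℂ := Complex.exp (z * Real.log (q ^ 2))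

/-- A placed skew shape `(c, λ/μ)`: a skew shape together with a content function on its
boxes with values in `ℝ + i[0, 2π/ln(q²))`, weakly increasing (among boxes whose contents
differ by integers) for the numbering order, increasing by exactly `1` precisely between
adjacent diagonals and constant precisely on diagonals. -/
structure PlacedSkewShape (q : ℝ) where
  S : SkewShape
  c : ℕ × ℕ → ℂ
  im_range : ∀ b ∈ S.cells, 0 ≤ (c b).im ∧ (c b).im < 2 * Real.pi / Real.log (q ^ 2)
  num_mono : ∀ b ∈ S.cells, ∀ b' ∈ S.cells, numLT b b' →
      (∃ k : ℤ, c b' - c b = (k : ℂ)) → (c b).re ≤ (c b').re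
  adj_diag : ∀ b ∈ S.cells, ∀ b' ∈ S.cells, (c b' = c b + 1 ↔ boxDiag b' = boxDiag b + 1)
  same_diag : ∀ b ∈ S.cells, ∀ b' ∈ S.cells, (c b = c b' ↔ boxDiag b = boxDiag b')

/-! ## The affine Hecke algebra: module structures

A module for the affine Hecke algebra `H̃_n` (with parameter `q`) is a complex vector
space together with operators `T_1, …, T_{n-1}` and invertible pairwise commuting
operators `x_1, …, x_n` satisfying the defining relations of `H̃_n`. -/

structure AHMod (n : ℕ) (q : ℂ) (M : Type) [AddCommGroup M] [Module ℂ M] where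
  T : ℕ → Module.End ℂ M
  x : ℕ → Module.End ℂ M
  comm_TT : ∀ i j, 1 ≤ i → j ≤ n - 1 → i + 1 < j → T i * T j = T j * T i
  braid : ∀ i, 1 ≤ i → i + 1 ≤ n - 1 → T i * T (i + 1) * T i = T (i + 1) * T i * T (i + 1)
  quad : ∀ i, 1 ≤ i → i ≤ n - 1 → T i * T i = (q - q⁻¹) • T i + 1
  comm_xx : ∀ i j, 1 ≤ i → i ≤ n → 1 ≤ j → j ≤ n → x i * x j = x j * x i
  comm_xT : ∀ i j, 1 ≤ i → i ≤ n → 1 ≤ j → j ≤ n - 1 → j + 1 ≠ i → j ≠ i →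
      x i * T j = T j * x i
  xsucc : ∀ i, 1 ≤ i → i + 1 ≤ n → x (i + 1) = T i * x i * T i
  x_unit : ∀ i, 1 ≤ i → i ≤ n → IsUnit (x i)

namespace AHMod

variable {n : ℕ} {q : ℂ} {M : Type} [AddCommGroup M] [Module ℂ M]

/-- `m` lies in the generalized weight space `M_t^gen`. -/
def genWt (A : AHMod n q M) (t : ℕ → ℂ) (m : M) : Prop :=
  ∀ i, 1 ≤ i → i ≤ n → ∃ k : ℕ, 0 < k ∧ ((A.x i - t i • (1 : Module.End ℂ M)) ^ k) m = 0

/-- `m` is a simultaneous eigenvector (weight vector) of weight `t`. -/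
def wtVec (A : AHMod n q M) (t : ℕ → ℂ) (m : M) : Prop :=
  ∀ i, 1 ≤ i → i ≤ n → A.x i m = t i • m

/-- `t` is a weight of `M`, i.e. `M_t^gen ≠ 0`. -/
def IsWeight (A : AHMod n q M) (t : ℕ → ℂ) : Prop := ∃ m : M, m ≠ 0 ∧ A.genWt t m

/-- A module is calibrated if it has a basis of simultaneous eigenvectors for the `x_i`. -/
def Calibrated (A : AHMod n q M) : Prop :=
  ∃ (ι : Type) (b : Module.Basis ι ℂ M), ∀ j : ι, ∃ t : ℕ → ℂ, A.wtVec t (b j)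

/-- A submodule invariant under all the operators. -/
def InvariantSub (A : AHMod n q M) (N : Submodule ℂ M) : Prop :=
  (∀ i, 1 ≤ i → i ≤ n - 1 → ∀ m ∈ N, A.T i m ∈ N) ∧
  (∀ i, 1 ≤ i → i ≤ n → ∀ m ∈ N, A.x i m ∈ N)

/-- Irreducibility: nonzero, and no invariant submodules besides `⊥` and `⊤`. -/
def IsIrreducible (A : AHMod n q M) : Prop :=
  (∃ m : M, m ≠ 0) ∧ ∀ N : Submodule ℂ M, A.InvariantSub N → N = ⊥ ∨ N = ⊤

end AHMod

/-- The weight `s_i t`: `t` with its `i`-th and `(i+1)`-st coordinates interchanged. -/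
def swapW (i : ℕ) (t : ℕ → ℂ) : ℕ → ℂ := fun j =>
  if j = i then t (i + 1) else if j = i + 1 then t i else t j

/-- The relation `m' = τ_i m` for `m` in the generalized weight space `M_t^gen`:
`m' = (T_i - (q - q⁻¹) x_{i+1} (x_{i+1} - x_i)⁻¹) m`, where the inverse is witnessed by an
element `u ∈ M_t^gen` with `(x_{i+1} - x_i) u = m`. -/
def AHMod.IsTau {n : ℕ} {q : ℂ} {M : Type} [AddCommGroup M] [Module ℂ M]
    (A : AHMod n q M) (i : ℕ) (t : ℕ → ℂ) (m m' : M) : Prop :=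
  A.genWt t m ∧ ∃ u, A.genWt t u ∧ (A.x (i + 1) - A.x i) u = m ∧
    m' = A.T i m - (q - q⁻¹) • (A.x (i + 1)) u

/-- `A.IsTauChain l t m m'` : `m' = τ_{i_p} ⋯ τ_{i_1} m` where `l = [i_1, …, i_p]` and
`m ∈ M_t^gen` (so `l` is the word read right-to-left: the head of `l` acts first). -/
def AHMod.IsTauChain {n : ℕ} {q : ℂ} {M : Type} [AddCommGroup M] [Module ℂ M]
    (A : AHMod n q M) : List ℕ → (ℕ → ℂ) → M → M → Prop
  | [], _, m, m' => m' = m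
  | i :: l, t, m, m' => ∃ a, A.IsTau i t m a ∧ A.IsTauChain l (swapW i t) a m'

/-! ## The modules `H̃^{(c,λ/μ)}` -/

/-- The effect on entries of interchanging `i` and `i+1`. -/
def swapEnt (i k : ℕ) : ℕ := if k = i then i + 1 else if k = i + 1 then i else k

/-- `L'` is the tableau `s_i L`: `L` with the entries `i` and `i+1` interchanged. -/
def IsSwapTab {S : SkewShape} {off n : ℕ} (i : ℕ) (L L' : StdTab S off n) : Prop :=
  ∀ b, L'.entry b = swapEnt i (L.entry b)

/-- The basis vector `v_{s_i L}`, interpreted as `0` if `s_i L` is not standard. -/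
def vswap {S : SkewShape} {off n : ℕ} (i : ℕ) (L : StdTab S off n) : StdTab S off n →₀ ℂ :=
  if h : ∃ L', IsSwapTab i L L' then Finsupp.single h.choose 1 else 0

/-- The diagonal coefficient `(T_i)_{LL} = (q - q⁻¹)/(1 - q^{2(c(L(i)) - c(L(i+1)))})`. -/
def TLL {q : ℝ} (P : PlacedSkewShape q) (off n i : ℕ) (L : StdTab P.S off n) : ℂ :=
  ((q : ℂ) - (q : ℂ)⁻¹) / (1 - qpow q (P.c (L.box i) - P.c (L.box (i + 1))))

/-- `A` is the `H̃_n`-module `H̃^{(c,λ/μ)}`: the prescribed action on the basis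
`{v_L}` indexed by standard tableaux. -/
def IsHTilde {q : ℝ} (n : ℕ) (P : PlacedSkewShape q)
    (A : AHMod n (q : ℂ) (StdTab P.S 0 n →₀ ℂ)) : Prop :=
  (∀ i, 1 ≤ i → i ≤ n → ∀ L : StdTab P.S 0 n,
      A.x i (Finsupp.single L 1) = qpow q (P.c (L.box i)) • Finsupp.single L 1) ∧
  (∀ i, 1 ≤ i → i ≤ n - 1 → ∀ L : StdTab P.S 0 n,
      A.T i (Finsupp.single L 1) =
        TLL P 0 n i L • Finsupp.single L 1 + ((q : ℂ)⁻¹ + TLL P 0 n i L) • vswap i L)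

/-! ## Words in the simple transpositions, reduced words, `T_w` -/

/-- A word in the simple transpositions `s_1, …, s_{n-1}`. -/
def isWord (n : ℕ) (l : List ℕ) : Prop := ∀ i ∈ l, 1 ≤ i ∧ i + 1 ≤ n

/-- The permutation of `{1, …, n} ⊆ ℕ` given by a word (`s_i` = transposition `(i, i+1)`). -/
def wordProd (l : List ℕ) : Equiv.Perm ℕ := (l.map fun i => Equiv.swap i (i + 1)).prod

/-- A reduced word: of minimal length among all words with the same product. -/
def isReducedWord (n : ℕ) (l : List ℕ) : Prop :=
  isWord n l ∧ ∀ l', isWord n l' → wordProd l' = wordProd l → l.length ≤ l'.length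

/-- The length `ℓ(w)` of a permutation: the length of a reduced word for it. -/
def lenOf (n : ℕ) (w : Equiv.Perm ℕ) : ℕ :=
  sInf {p | ∃ l, isWord n l ∧ wordProd l = w ∧ l.length = p}

/-- Bruhat-Chevalley order on `S_n`: `v ≤ w` if some reduced expression for `w` has a
subword equal to `v`. -/
def BruhatLE (n : ℕ) (v w : Equiv.Perm ℕ) : Prop :=
  ∃ l, isReducedWord n l ∧ wordProd l = w ∧ ∃ l', List.Sublist l' l ∧ wordProd l' = v

/-- The operator `T_{i_1} ⋯ T_{i_p}` for a word `l = [i_1, …, i_p]`. -/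
def TopWord {n : ℕ} {q : ℂ} {M : Type} [AddCommGroup M] [Module ℂ M]
    (A : AHMod n q M) (l : List ℕ) : Module.End ℂ M := (l.map A.T).prod

end


section TauAux
variable {M : Type} [AddCommGroup M] [Module ℂ M]

lemma tau_pow_apply_mono {f : Module.End ℂ M} {m : M} {k : ℕ} (h : (f ^ k) m = 0)
    {K : ℕ} (hK : k ≤ K) : (f ^ K) m = 0 := by
  obtain ⟨d, rfl⟩ := Nat.exists_eq_add_of_le hK
  rw [add_comm, pow_add, Module.End.mul_apply, h, map_zero]

lemma tau_sub_pow_apply {A B : Module.End ℂ M} (h : Commute A B) {m : M} {k l : ℕ}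
    (hA : (A ^ k) m = 0) (hB : (B ^ l) m = 0) : ((B - A) ^ (k + l)) m = 0 := by
  have h' : Commute B (-A) := h.symm.neg_right
  rw [sub_eq_add_neg, h'.add_pow, LinearMap.sum_apply]
  apply Finset.sum_eq_zero
  intro j hj
  rw [Finset.mem_range] at hj
  by_cases hjl : j ≤ l
  · have hk : k ≤ k + l - j := by omega
    have hz : ((-A) ^ (k + l - j)) m = 0 := by
      rw [neg_pow, Module.End.mul_apply, tau_pow_apply_mono hA hk, map_zero]
    rw [Module.End.mul_apply, Module.End.mul_apply, Module.End.natCast_apply, map_nsmul, hz,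
      smul_zero, map_zero]
  · have hlj : l ≤ j := by omega
    rw [(h'.pow_pow j (k + l - j)).eq, Module.End.mul_apply, Module.End.mul_apply,
      Module.End.natCast_apply, map_nsmul, tau_pow_apply_mono hB hlj, smul_zero, map_zero]

lemma tau_solve {N : Module.End ℂ M} {c : ℂ} (hc : c ≠ 0) {m : M} {K : ℕ}
    (hK : (N ^ K) m = 0) :
    ∃ u, (N + c • 1) u = m ∧ ∀ D : Module.End ℂ M, Commute D N →
      ∀ k : ℕ, (D ^ k) m = 0 → (D ^ k) u = 0 := by
  refine ⟨c⁻¹ • ((∑ j ∈ Finset.range K, ((-c⁻¹) • N) ^ j) m), ?_, ?_⟩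
  · have hfac : N + c • (1 : Module.End ℂ M) = c • (1 - (-c⁻¹) • N) := by
      rw [smul_sub, smul_smul, mul_neg, mul_inv_cancel₀ hc, neg_smul, one_smul, sub_neg_eq_add]
      abel
    have hcommPS : Commute ((1 : Module.End ℂ M) - (-c⁻¹) • N)
        (∑ j ∈ Finset.range K, ((-c⁻¹) • N) ^ j) :=
      Commute.sum_right _ _ _ fun j _ => ((Commute.one_left _).sub_left (Commute.refl _)).pow_right j
    have hmul : ((1 : Module.End ℂ M) - (-c⁻¹) • N) *
        (∑ j ∈ Finset.range K, ((-c⁻¹) • N) ^ j) = 1 - ((-c⁻¹) • N) ^ K := by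
      rw [hcommPS.eq]
      have h2 : (∑ j ∈ Finset.range K, ((-c⁻¹) • N) ^ j) * (1 - (-c⁻¹) • N)
          = -((∑ j ∈ Finset.range K, ((-c⁻¹) • N) ^ j) * ((-c⁻¹) • N - 1)) := by
        rw [← mul_neg, neg_sub]
      rw [h2, geom_sum_mul, neg_sub]
    have hPK : (((-c⁻¹) • N) ^ K) m = 0 := by
      rw [smul_pow, LinearMap.smul_apply, hK, smul_zero]
    rw [hfac, LinearMap.smul_apply, map_smul, smul_smul, mul_inv_cancel₀ hc, one_smul,
      ← Module.End.mul_apply, hmul, LinearMap.sub_apply, Module.End.one_apply, hPK, sub_zero]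
  · intro D hDN k hk
    have hDP : Commute (D ^ k) (∑ j ∈ Finset.range K, ((-c⁻¹) • N) ^ j) :=
      (Commute.sum_right _ _ _ fun j _ => (hDN.smul_right _).pow_right j).pow_left k
    rw [map_smul, ← Module.End.mul_apply, hDP.eq, Module.End.mul_apply, hk, map_zero, smul_zero]

lemma tau_unique {N : Module.End ℂ M} {c : ℂ} (hc : c ≠ 0) {w : M} {K : ℕ}
    (hK : (N ^ K) w = 0) (hw : (N + c • 1) w = 0) : w = 0 := by
  have hNw : N w = (-c) • w := by
    rw [LinearMap.add_apply, LinearMap.smul_apply, Module.End.one_apply] at hw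
    rw [neg_smul]
    exact eq_neg_of_add_eq_zero_left hw
  have hpow : ∀ j : ℕ, (N ^ j) w = ((-c) ^ j) • w := by
    intro j; induction j with
    | zero => simp
    | succ j ih => rw [pow_succ, Module.End.mul_apply, hNw, map_smul, ih, smul_smul, ← pow_succ']
  have h0 : ((-c) ^ K) • w = 0 := by rw [← hpow, hK]
  have hne : (-c) ^ K ≠ 0 := pow_ne_zero _ (neg_ne_zero.mpr hc)
  exact (smul_eq_zero.mp h0).resolve_left hne

lemma tau_step {T X Y : Module.End ℂ M} {c1 s : ℂ}
    (hXT : X * T = T * Y - c1 • Y) (hXY : X * Y = Y * X)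
    (v w : M) (hw : (Y - X) w = v) :
    (X - s • 1) (T v - c1 • Y w) = T ((Y - s • 1) v) - c1 • Y ((Y - s • 1) w) := by
  have hXw : X w = Y w - v := by rw [← hw, LinearMap.sub_apply]; abel
  have h1 : X (T v) = T (Y v) - c1 • Y v := by
    rw [← Module.End.mul_apply, hXT, LinearMap.sub_apply, LinearMap.smul_apply,
      Module.End.mul_apply]
  have h2 : X (Y w) = Y (Y w) - Y v := by
    rw [← Module.End.mul_apply, hXY, Module.End.mul_apply, hXw, map_sub]
  simp only [LinearMap.sub_apply, LinearMap.smul_apply, Module.End.one_apply, map_sub,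
    map_smul, h1, h2]
  module

lemma tau_step' {T X Y : Module.End ℂ M} {c1 s : ℂ}
    (hYT : Y * T = T * X + c1 • Y)
    (v w : M) (hw : (Y - X) w = v) :
    (Y - s • 1) (T v - c1 • Y w) = T ((X - s • 1) v) - c1 • Y ((X - s • 1) w) := by
  have hYw : Y w = v + X w := by rw [← hw, LinearMap.sub_apply]; abel
  have h2 : Y (Y w) = Y v + Y (X w) := by rw [hYw, map_add]
  have h1 : Y (T v) = T (X v) + c1 • Y v := by
    rw [← Module.End.mul_apply, hYT, LinearMap.add_apply, LinearMap.smul_apply,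
      Module.End.mul_apply]
  simp only [LinearMap.sub_apply, LinearMap.smul_apply, Module.End.one_apply, map_sub,
    map_smul, h1, h2]
  module

lemma tau_iter {T X Y : Module.End ℂ M} {c1 s : ℂ}
    (hXT : X * T = T * Y - c1 • Y) (hXY : X * Y = Y * X) :
    ∀ (k : ℕ) (v w : M), (Y - X) w = v →
      ((X - s • 1) ^ k) (T v - c1 • Y w)
        = T (((Y - s • 1) ^ k) v) - c1 • Y (((Y - s • 1) ^ k) w) := by
  intro k
  induction k with
  | zero => intro v w _; simp
  | succ k ih =>
    intro v w hw
    have hcomm : Commute (Y - X) (Y - s • 1) :=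
      ((Commute.refl Y).sub_left hXY).sub_right ((Commute.one_right _).smul_right s)
    have hw' : (Y - X) ((Y - s • 1) w) = (Y - s • 1) v := by
      rw [← Module.End.mul_apply, hcomm.eq, Module.End.mul_apply, hw]
    rw [pow_succ, Module.End.mul_apply, tau_step hXT hXY v w hw, ih _ _ hw', pow_succ,
      Module.End.mul_apply, Module.End.mul_apply]

lemma tau_iter' {T X Y : Module.End ℂ M} {c1 s : ℂ}
    (hYT : Y * T = T * X + c1 • Y) (hXY : X * Y = Y * X) :
    ∀ (k : ℕ) (v w : M), (Y - X) w = v →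
      ((Y - s • 1) ^ k) (T v - c1 • Y w)
        = T (((X - s • 1) ^ k) v) - c1 • Y (((X - s • 1) ^ k) w) := by
  intro k
  induction k with
  | zero => intro v w _; simp
  | succ k ih =>
    intro v w hw
    have hcomm : Commute (Y - X) (X - s • 1) :=
      ((show Commute X Y from hXY).symm.sub_left (Commute.refl X)
        : Commute (Y - X) X).sub_right ((Commute.one_right _).smul_right s)
    have hw' : (Y - X) ((X - s • 1) w) = (X - s • 1) v := by
      rw [← Module.End.mul_apply, hcomm.eq, Module.End.mul_apply, hw]
    rw [pow_succ, Module.End.mul_apply, tau_step' hYT v w hw, ih _ _ hw', pow_succ,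
      Module.End.mul_apply, Module.End.mul_apply]

lemma tau_comm_iter {T Y D : Module.End ℂ M} {c1 : ℂ}
    (hDT : Commute D T) (hDY : Commute D Y) (k : ℕ) (v w : M) :
    (D ^ k) (T v - c1 • Y w) = T ((D ^ k) v) - c1 • Y ((D ^ k) w) := by
  have h1 : (D ^ k) (T v) = T ((D ^ k) v) := by
    rw [← Module.End.mul_apply, (hDT.pow_left k).eq, Module.End.mul_apply]
  have h2 : (D ^ k) (Y w) = Y ((D ^ k) w) := by
    rw [← Module.End.mul_apply, (hDY.pow_left k).eq, Module.End.mul_apply]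
  rw [map_sub, map_smul, h1, h2]

end TauAux

/-- For a finite-dimensional `H̃_n`-module `M` and `t ∈ (ℂ^×)^n` with
`t_i ≠ t_{i+1}`, the operator `x_{i+1} - x_i` is invertible on the generalized weight
space `M_t^gen` (so `τ_i` is well defined there), and
`τ_i m = (T_i - (q - q⁻¹) x_{i+1} (x_{i+1} - x_i)⁻¹) m` lies in `M_{s_i t}^gen`. -/

theorem tau_well_defined
    (n : ℕ) (q : ℂ) (hq0 : q ≠ 0) (hq : ∀ k : ℕ, 0 < k → q ^ k ≠ 1)
    (M : Type) [AddCommGroup M] [Module ℂ M] [FiniteDimensional ℂ M]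
    (A : AHMod n q M)
    (i : ℕ) (hi1 : 1 ≤ i) (hin : i ≤ n - 1)
    (t : ℕ → ℂ) (ht0 : ∀ j, 1 ≤ j → j ≤ n → t j ≠ 0) (hti : t i ≠ t (i + 1)) :
    (∀ m, A.genWt t m → ∃! u, A.genWt t u ∧ (A.x (i + 1) - A.x i) u = m) ∧
    (∀ m u, A.genWt t m → A.genWt t u → (A.x (i + 1) - A.x i) u = m →
      A.genWt (swapW i t) (A.T i m - (q - q⁻¹) • (A.x (i + 1)) u)) := by
  have hn2 : 2 ≤ n := by omega
  have hiN : i ≤ n := by omega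
  have hi1n : i + 1 ≤ n := by omega
  have hc : t (i + 1) - t i ≠ 0 := sub_ne_zero.mpr (Ne.symm hti)
  have hXY : Commute (A.x i) (A.x (i + 1)) := A.comm_xx i (i + 1) hi1 hiN (by omega) hi1n
  have hxN : ∀ j, 1 ≤ j → j ≤ n →
      Commute (A.x j) (A.x (i + 1) - A.x i - (t (i + 1) - t i) • 1) := by
    intro j h1 h2
    have c1 : Commute (A.x j) (A.x (i + 1)) := A.comm_xx j (i + 1) h1 h2 (by omega) hi1n
    have c2 : Commute (A.x j) (A.x i) := A.comm_xx j i h1 h2 hi1 hiN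
    exact (c1.sub_right c2).sub_right ((Commute.one_right _).smul_right _)
  have hNnil : ∀ m, A.genWt t m →
      ∃ K, ((A.x (i + 1) - A.x i - (t (i + 1) - t i) • (1 : Module.End ℂ M)) ^ K) m = 0 := by
    intro m hm
    obtain ⟨k, _, hk⟩ := hm i hi1 hiN
    obtain ⟨l, _, hl⟩ := hm (i + 1) (by omega) hi1n
    refine ⟨k + l, ?_⟩
    have hN' : A.x (i + 1) - A.x i - (t (i + 1) - t i) • (1 : Module.End ℂ M)
        = (A.x (i + 1) - t (i + 1) • 1) - (A.x i - t i • 1) := by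
      rw [sub_smul]; abel
    have hcm : Commute (A.x i - t i • (1 : Module.End ℂ M)) (A.x (i + 1) - t (i + 1) • 1) :=
      (hXY.sub_right ((Commute.one_right _).smul_right _)).sub_left
        ((Commute.one_left _).smul_left _)
    rw [hN']
    exact tau_sub_pow_apply hcm hk hl
  have solve : ∀ m, A.genWt t m → ∃ u, A.genWt t u ∧ (A.x (i + 1) - A.x i) u = m := by
    intro m hm
    obtain ⟨K, hK⟩ := hNnil m hm
    obtain ⟨u, hu1, hu2⟩ := tau_solve hc hK
    rw [sub_add_cancel] at hu1
    refine ⟨u, ?_, hu1⟩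
    intro j hj1 hjn
    obtain ⟨k, hk0, hk⟩ := hm j hj1 hjn
    exact ⟨k, hk0,
      hu2 _ ((hxN j hj1 hjn).sub_left ((Commute.one_left _).smul_left _)) k hk⟩
  have uniq : ∀ m u₁ u₂, A.genWt t u₁ → A.genWt t u₂ →
      (A.x (i + 1) - A.x i) u₁ = m → (A.x (i + 1) - A.x i) u₂ = m → u₁ = u₂ := by
    intro m u₁ u₂ h1 h2 e1 e2
    have hgw : A.genWt t (u₁ - u₂) := by
      intro j hj1 hjn
      obtain ⟨k1, hk10, hk1⟩ := h1 j hj1 hjn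
      obtain ⟨k2, hk20, hk2⟩ := h2 j hj1 hjn
      refine ⟨k1 + k2, by omega, ?_⟩
      rw [map_sub, tau_pow_apply_mono hk1 (Nat.le_add_right _ _),
        tau_pow_apply_mono hk2 (Nat.le_add_left _ _), sub_zero]
    obtain ⟨K, hK⟩ := hNnil _ hgw
    have hz : (A.x (i + 1) - A.x i) (u₁ - u₂) = 0 := by rw [map_sub, e1, e2, sub_self]
    have := tau_unique hc hK (by rwa [sub_add_cancel])
    exact sub_eq_zero.mp this
  have hT2 : A.T i * A.T i = (q - q⁻¹) • A.T i + 1 := A.quad i hi1 hin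
  have hxs : A.x (i + 1) = A.T i * A.x i * A.T i := A.xsucc i hi1 hi1n
  have hTY : A.T i * A.x (i + 1) = A.x i * A.T i + (q - q⁻¹) • A.x (i + 1) := by
    calc A.T i * A.x (i + 1) = (A.T i * A.T i) * (A.x i * A.T i) := by
          rw [hxs]; noncomm_ring
      _ = (q - q⁻¹) • (A.T i * A.x i * A.T i) + A.x i * A.T i := by
          rw [hT2, add_mul, one_mul, smul_mul_assoc, mul_assoc]
      _ = A.x i * A.T i + (q - q⁻¹) • A.x (i + 1) := by rw [← hxs, add_comm]
  have hYT : A.x (i + 1) * A.T i = A.T i * A.x i + (q - q⁻¹) • A.x (i + 1) := by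
    calc A.x (i + 1) * A.T i = (A.T i * A.x i) * (A.T i * A.T i) := by
          rw [hxs]; noncomm_ring
      _ = (q - q⁻¹) • (A.T i * A.x i * A.T i) + A.T i * A.x i := by
          rw [hT2, mul_add, mul_one, mul_smul_comm]
      _ = A.T i * A.x i + (q - q⁻¹) • A.x (i + 1) := by rw [← hxs, add_comm]
  have hXT : A.x i * A.T i = A.T i * A.x (i + 1) - (q - q⁻¹) • A.x (i + 1) := by
    rw [hTY]; abel
  refine ⟨?_, ?_⟩
  · intro m hm
    obtain ⟨u, hu, hyu⟩ := solve m hm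
    exact ⟨u, ⟨hu, hyu⟩, fun u' hu' => uniq m u' u hu'.1 hu hu'.2 hyu⟩
  · intro m u hm hu hyu
    intro j hj1 hjn
    by_cases hji : j = i
    · subst hji
      have hsw : swapW j t j = t (j + 1) := by simp [swapW]
      obtain ⟨km, hkm0, hkm⟩ := hm (j + 1) (by omega) hi1n
      obtain ⟨ku, hku0, hku⟩ := hu (j + 1) (by omega) hi1n
      refine ⟨km + ku, by omega, ?_⟩
      rw [hsw, tau_iter hXT hXY.eq (km + ku) m u hyu,
        tau_pow_apply_mono hkm (Nat.le_add_right _ _),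
        tau_pow_apply_mono hku (Nat.le_add_left _ _), map_zero, map_zero, smul_zero, sub_zero]
    · by_cases hji1 : j = i + 1
      · subst hji1
        have hsw : swapW i t (i + 1) = t i := by
          have h : ¬(i + 1 = i) := by omega
          simp [swapW, h]
        obtain ⟨km, hkm0, hkm⟩ := hm i hi1 hiN
        obtain ⟨ku, hku0, hku⟩ := hu i hi1 hiN
        refine ⟨km + ku, by omega, ?_⟩
        rw [hsw, tau_iter' hYT hXY.eq (km + ku) m u hyu,
          tau_pow_apply_mono hkm (Nat.le_add_right _ _),
          tau_pow_apply_mono hku (Nat.le_add_left _ _), map_zero, map_zero, smul_zero, sub_zero]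
      · have hsw : swapW i t j = t j := by simp [swapW, hji, hji1]
        have hjT : Commute (A.x j) (A.T i) :=
          A.comm_xT j i hj1 hjn hi1 hin (by omega) (by omega)
        have hjY : Commute (A.x j) (A.x (i + 1)) :=
          A.comm_xx j (i + 1) hj1 hjn (by omega) hi1n
        have hDT : Commute (A.x j - t j • 1) (A.T i) :=
          hjT.sub_left ((Commute.one_left _).smul_left _)
        have hDY : Commute (A.x j - t j • 1) (A.x (i + 1)) :=
          hjY.sub_left ((Commute.one_left _).smul_left _)
        obtain ⟨km, hkm0, hkm⟩ := hm j hj1 hjn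
        obtain ⟨ku, hku0, hku⟩ := hu j hj1 hjn
        refine ⟨km + ku, by omega, ?_⟩
        rw [hsw, tau_comm_iter hDT hDY (km + ku) m u,
          tau_pow_apply_mono hkm (Nat.le_add_right _ _),
          tau_pow_apply_mono hku (Nat.le_add_left _ _), map_zero, map_zero, smul_zero, sub_zero]
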